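/- arXiv:1002.3290 — 2 statements merged into one kernel-verified Lean document; each statement's English description precedes it below -/
import Mathlib

section
/- Let E₀, E be Polish spaces, K ⊆ E₀ compact, and suppose (ζ, q) ↦ I_ζ via I_ζ(φ) = inf{L(q) : q ∈ S, φ = G⁰(ζ, q)} where S is a topological space, L : S → [0, ∞] has compact sublevel sets {L ≤ M}, and G⁰ : E₀ × S → E is continuous on K × {L ≤ M} for each M. If ζ ↦ I_ζ(φ) is lower semicontinuous for each φ ∈ E, then for every M < ∞ the set ⋃_{ζ ∈ K} {φ : I_ζ(φ) ≤ M} is closed and contained in the compact set G⁰(K × {L ≤ M + 1}), hence compact. -/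
open Set ENNReal

/-- Uniform compact level sets for the rate function I_ζ(φ) = inf{L(q) : G⁰(ζ,q) = φ}:
if L has compact sublevel sets, G⁰ is continuous on K × {L ≤ M} and ζ ↦ I_ζ(φ) is
lower semicontinuous, then ⋃_{ζ∈K}{I_ζ ≤ M} is closed, contained in the compact set
G⁰(K × {L ≤ M+1}), and hence compact. -/
theorem stmt_10 {E₀ E S : Type*} [MetricSpace E₀] [MetricSpace E] [TopologicalSpace S]
    (K : Set E₀) (hK : IsCompact K)
    (L : S → ℝ≥0∞) (hL : ∀ M : ℝ, IsCompact {q : S | L q ≤ ENNReal.ofReal M})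
    (G0 : E₀ × S → E)
    (hG : ∀ M : ℝ, ContinuousOn G0 (K ×ˢ {q : S | L q ≤ ENNReal.ofReal M}))
    (I : E₀ → E → ℝ≥0∞)
    (hI : ∀ ζ φ, I ζ φ = ⨅ q ∈ {q : S | G0 (ζ, q) = φ}, L q)
    (hlsc : ∀ φ : E, LowerSemicontinuous (fun ζ => I ζ φ))
    (M : ℝ) (hM : 0 ≤ M) :
    IsClosed (⋃ ζ ∈ K, {φ : E | I ζ φ ≤ ENNReal.ofReal M}) ∧
    (⋃ ζ ∈ K, {φ : E | I ζ φ ≤ ENNReal.ofReal M})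
      ⊆ G0 '' (K ×ˢ {q : S | L q ≤ ENNReal.ofReal (M + 1)}) ∧
    IsCompact (⋃ ζ ∈ K, {φ : E | I ζ φ ≤ ENNReal.ofReal M}) := by
  set A := ⋃ ζ ∈ K, {φ : E | I ζ φ ≤ ENNReal.ofReal M} with hA
  set C : ℕ → Set E :=
    fun k => G0 '' (K ×ˢ {q : S | L q ≤ ENNReal.ofReal (M + 1/((k:ℝ)+1))}) with hC
  have hδ : ∀ k : ℕ, (0:ℝ) < 1/((k:ℝ)+1) := fun k => by positivity
  have hCcomp : ∀ k, IsCompact (C k) := fun k =>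
    (hK.prod (hL _)).image_of_continuousOn (hG _)
  have hsub : ∀ k, A ⊆ C k := by
    intro k φ hφ
    simp only [hA, mem_iUnion, mem_setOf_eq] at hφ
    obtain ⟨ζ, hζK, hζ⟩ := hφ
    have hlt : I ζ φ < ENNReal.ofReal (M + 1/((k:ℝ)+1)) := by
      refine lt_of_le_of_lt hζ ?_
      exact (ENNReal.ofReal_lt_ofReal_iff_of_nonneg hM).mpr (by linarith [hδ k])
    rw [hI, iInf_lt_iff] at hlt
    obtain ⟨q, hq⟩ := hlt
    rw [iInf_lt_iff] at hq
    obtain ⟨hqmem, hq⟩ := hq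
    exact ⟨(ζ, q), ⟨hζK, hq.le⟩, hqmem⟩
  have hAeq : A = ⋂ k, C k := by
    refine Subset.antisymm (subset_iInter hsub) ?_
    intro φ hφ
    simp only [mem_iInter, hC, mem_image] at hφ
    choose x hx hGx using hφ
    have hxK : ∀ k, (x k).1 ∈ K := fun k => (hx k).1
    have hIle : ∀ k, I ((x k).1) φ ≤ ENNReal.ofReal (M + 1/((k:ℝ)+1)) := by
      intro k
      rw [hI]
      refine iInf₂_le_of_le (x k).2 ?_ ((hx k).2)
      show G0 ((x k).1, (x k).2) = φ
      rw [Prod.mk.eta]; exact hGx k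
    obtain ⟨ζ, hζK, g, hg, htend⟩ := hK.tendsto_subseq (x := fun k => (x k).1) hxK
    refine mem_iUnion₂.mpr ⟨ζ, hζK, ?_⟩
    show I ζ φ ≤ ENNReal.ofReal M
    by_contra h
    push_neg at h
    obtain ⟨c, hc1, hc2⟩ := exists_between h
    have hev1 : ∀ᶠ j in Filter.atTop, c < I ((x (g j)).1) φ :=
      htend.eventually (hlsc φ ζ c hc2)
    have h1 : Filter.Tendsto (fun j : ℕ => (1:ℝ)/((g j : ℝ)+1)) Filter.atTop (nhds 0) :=
      tendsto_one_div_add_atTop_nhds_zero_nat.comp hg.tendsto_atTop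
    have h2 : Filter.Tendsto (fun j : ℕ => ENNReal.ofReal (M + 1/((g j : ℝ)+1)))
        Filter.atTop (nhds (ENNReal.ofReal M)) := by
      have := (tendsto_const_nhds (x := M) (f := Filter.atTop)).add h1
      rw [add_zero] at this
      exact (ENNReal.continuous_ofReal.tendsto M).comp this
    have hev2 : ∀ᶠ j in Filter.atTop,
        ENNReal.ofReal (M + 1/((g j : ℝ)+1)) < c := h2.eventually_lt_const hc1
    obtain ⟨j, hj1, hj2⟩ := (hev1.and hev2).exists
    exact absurd (hj1.trans_le (hIle (g j))) (not_lt.mpr hj2.le)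
  have hclosed : IsClosed A := by
    rw [hAeq]; exact isClosed_iInter fun k => (hCcomp k).isClosed
  have hC0 : C 0 = G0 '' (K ×ˢ {q : S | L q ≤ ENNReal.ofReal (M + 1)}) := by
    norm_num [hC]
  refine ⟨hclosed, ?_, ?_⟩
  · rw [← hC0]; exact hsub 0
  · exact (hCcomp 0).of_isClosed_subset hclosed (hsub 0)
end

section
/- Let E be a Polish space, (Z^ε) a family of E-valued random variables, F : E → ℝ bounded continuous, and I : E → [0, ∞] given by I(φ) = inf{L(q) : q ∈ S_φ}. Suppose for each δ > 0 there exists q = (f, g) with φ₀ = G⁰(q), L(q) ≤ I(φ₀) + δ, and a variational upper bound −ε log E[e^{−F(Z^ε)/ε}] ≤ L(q) + E[F(G^ε(q_ε))] where G^ε(q_ε) ⇒ G⁰(q) as ε → 0. Then limsup_{ε→0} −ε log E[e^{−F(Z^ε)/ε}] ≤ inf_{φ∈E} (I(φ) + F(φ)). -/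
open Filter Topology MeasureTheory ENNReal

/-- Laplace-principle upper bound: if for each φ₀ and δ > 0 there is a near-optimal
control q with G⁰(q) = φ₀, L(q) ≤ I(φ₀) + δ, and the variational bound
−ε log E[e^{−F(Z^ε)/ε}] ≤ L(q) + E[F(G^ε(q_ε))] with E[F(G^ε(q_ε))] → F(φ₀)
(by weak convergence G^ε(q_ε) ⇒ G⁰(q)), then
limsup_{ε→0} −ε log E[e^{−F(Z^ε)/ε}] ≤ inf_φ (I(φ) + F(φ)). -/
theorem stmt_16 {E S : Type*} [MetricSpace E] [MeasurableSpace E] [BorelSpace E]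
    (μ : ℝ → Measure E) (hμ : ∀ ε > 0, IsProbabilityMeasure (μ ε))
    (F : E → ℝ) (hFc : Continuous F) (hFb : ∃ C, ∀ x, |F x| ≤ C)
    (G0 : S → E) (L : S → ℝ≥0∞)
    (I : E → ℝ≥0∞) (hI : ∀ φ, I φ = ⨅ q ∈ {q : S | G0 q = φ}, L q)
    (V : ℝ → ℝ)
    (hV : ∀ ε > 0, V ε = -ε * Real.log (∫ x, Real.exp (-(F x) / ε) ∂(μ ε)))
    (hub : ∀ φ₀ : E, ∀ δ > 0, ∃ q : S, G0 q = φ₀ ∧ L q ≤ I φ₀ + ENNReal.ofReal δ ∧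
      ∃ A : ℝ → ℝ,
        (∀ᶠ ε in 𝓝[>] (0:ℝ), (V ε : EReal) ≤ (L q : EReal) + (A ε : EReal)) ∧
        Tendsto A (𝓝[>] (0:ℝ)) (𝓝 (F φ₀))) :
    limsup (fun ε => (V ε : EReal)) (𝓝[>] (0:ℝ))
      ≤ ⨅ φ : E, ((I φ : EReal) + (F φ : EReal)) := by
  refine le_iInf fun φ => ?_
  by_cases hIφ : I φ = ⊤
  · simp [hIφ, EReal.coe_ennreal_top, EReal.top_add_coe]
  -- key bound with slack δ
  have key : ∀ δ : ℝ, 0 < δ →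
      limsup (fun ε => (V ε : EReal)) (𝓝[>] (0:ℝ))
        ≤ (((I φ).toReal + F φ + δ : ℝ) : EReal) := by
    intro δ hδ
    obtain ⟨q, hq, hLq, A, hVA, hA⟩ := hub φ δ hδ
    have hLqt : L q ≠ ⊤ := by
      intro h
      rw [h] at hLq
      exact hIφ (by
        have : I φ + ENNReal.ofReal δ = ⊤ := top_le_iff.mp hLq
        rcases ENNReal.add_eq_top.mp this with h' | h'
        · exact h'
        · exact absurd h' ENNReal.ofReal_ne_top)
    set l : ℝ := (L q).toReal with hl
    have hcoe : ((l : ℝ) : EReal) = ((L q : ℝ≥0∞) : EReal) := by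
      rw [hl, ← EReal.toReal_coe_ennreal (x := L q)]
      exact EReal.coe_toReal (by simp [EReal.coe_ennreal_eq_top_iff, hLqt])
        (EReal.coe_ennreal_ne_bot _)
    have hg : Tendsto (fun ε => ((l + A ε : ℝ) : EReal)) (𝓝[>] (0:ℝ))
        (𝓝 ((l + F φ : ℝ) : EReal)) :=
      (continuous_coe_real_ereal.tendsto _).comp (tendsto_const_nhds.add hA)
    have h1 : limsup (fun ε => (V ε : EReal)) (𝓝[>] (0:ℝ))
        ≤ limsup (fun ε => ((l + A ε : ℝ) : EReal)) (𝓝[>] (0:ℝ)) := by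
      refine limsup_le_limsup ?_
      filter_upwards [hVA] with ε hε
      rw [EReal.coe_add, hcoe]
      exact hε
    have h2 : limsup (fun ε => ((l + A ε : ℝ) : EReal)) (𝓝[>] (0:ℝ))
        = ((l + F φ : ℝ) : EReal) := hg.limsup_eq
    refine (h1.trans h2.le).trans ?_
    rw [EReal.coe_le_coe_iff]
    have hlle : l ≤ (I φ).toReal + δ := by
      have := ENNReal.toReal_mono (by
        simp [ENNReal.add_eq_top, hIφ, ENNReal.ofReal_ne_top]) hLq
      rwa [ENNReal.toReal_add hIφ ENNReal.ofReal_ne_top,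
        ENNReal.toReal_ofReal hδ.le] at this
    linarith
  -- remove the slack
  have hr : ((I φ : ℝ≥0∞) : EReal) + (F φ : EReal)
      = (((I φ).toReal + F φ : ℝ) : EReal) := by
    rw [EReal.coe_add]
    congr 1
    rw [← EReal.toReal_coe_ennreal (x := I φ)]
    exact (EReal.coe_toReal (by simp [EReal.coe_ennreal_eq_top_iff, hIφ])
      (EReal.coe_ennreal_ne_bot _)).symm
  rw [hr]
  rw [← EReal.le_of_forall_lt_iff_le]
  intro z hz
  have hδ : 0 < z - ((I φ).toReal + F φ) := by
    rw [EReal.coe_lt_coe_iff] at hz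
    linarith
  have := key _ hδ
  convert this using 2
  ring
end
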